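/- Let p be a prime, L a finite field of characteristic p, and β a field automorphism of L of order p. Then the semidirect product L ⋊ ⟨β⟩ (with β acting on the additive group of L) does not have exponent p; that is, it contains an element of order p². -/

import Mathlib

lemma aux_trace_ne (p : ℕ) (hp : p.Prime) (L : Type*) [Field L] [Fintype L]
    (β : L ≃+* L) (hβ : orderOf β = p) :
    ∃ x : L, ∑ i ∈ Finset.range p, (β ^ i) x ≠ 0 := by
  by_contra h
  push_neg at h
  have hinj : Function.Injective (fun i : Fin p => ((β ^ (i : ℕ)).toRingHom.toMonoidHom)) := by
    intro i j hij
    have hfun : ∀ x : L, (β ^ (i : ℕ)) x = (β ^ (j : ℕ)) x := fun x =>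
      congrArg (fun f : L →* L => f x) hij
    have : β ^ (i : ℕ) = β ^ (j : ℕ) := RingEquiv.ext hfun
    have := pow_injOn_Iio_orderOf (x := β) (by simpa [hβ] using i.2) (by simpa [hβ] using j.2) this
    exact Fin.ext this
  have li := (linearIndependent_monoidHom L L).comp _ hinj
  have := Fintype.linearIndependent_iff.mp li (fun _ => 1) ?_ ⟨0, hp.pos⟩
  · exact one_ne_zero this
  · funext x
    have := h x
    simpa [Finset.sum_apply, Fin.sum_univ_eq_sum_range (fun i => (⇑β)^[i] x)] using this

/-- The semidirect product `L ⋊ ⟨β⟩` of the additive group of a finite field `L` of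
characteristic `p` with a field automorphism `β` of order `p` contains an element
of order `p ^ 2`; in particular it does not have exponent `p`. -/
theorem stmt_8 (p : ℕ) (hp : p.Prime) (L : Type*) [Field L] [Fintype L] [CharP L p]
    (β : L ≃+* L) (hβ : orderOf β = p)
    (φ : Multiplicative (ZMod p) →* MulAut (Multiplicative L))
    (hφ : ∀ (i : ZMod p) (x : L),
      φ (Multiplicative.ofAdd i) (Multiplicative.ofAdd x)
        = Multiplicative.ofAdd ((β ^ i.val) x)) :
    ∃ g : Multiplicative L ⋊[φ] Multiplicative (ZMod p), orderOf g = p ^ 2 := by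
  haveI : Fact p.Prime := ⟨hp⟩
  obtain ⟨x, hx⟩ := aux_trace_ne p hp L β hβ
  set g : Multiplicative L ⋊[φ] Multiplicative (ZMod p) :=
    ⟨Multiplicative.ofAdd x, Multiplicative.ofAdd (1 : ZMod p)⟩ with hg
  have key : ∀ k : ℕ, g ^ k =
      ⟨Multiplicative.ofAdd (∑ i ∈ Finset.range k, (β ^ i) x),
        Multiplicative.ofAdd ((k : ZMod p))⟩ := by
    intro k
    induction k with
    | zero => ext <;> simp
    | succ k ih =>
      rw [pow_succ, ih]
      ext
      · rw [SemidirectProduct.mul_left]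
        show _ * (φ (Multiplicative.ofAdd (k : ZMod p)) (Multiplicative.ofAdd x)) = _
        rw [hφ]
        have hpow : (β ^ ((k : ZMod p)).val) x = (β ^ k) x := by
          rw [ZMod.val_natCast, ← hβ, pow_mod_orderOf]
        rw [hpow]
        show Multiplicative.ofAdd (∑ i ∈ Finset.range k, (β ^ i) x + (β ^ k) x) = _
        rw [Finset.sum_range_succ]
        rfl
      · rw [SemidirectProduct.mul_right]
        show Multiplicative.ofAdd ((k : ZMod p) + 1) = _
        push_cast
        rfl
  have hgp : g ^ p = SemidirectProduct.inl
      (Multiplicative.ofAdd (∑ i ∈ Finset.range p, (β ^ i) x)) := by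
    rw [key p]
    ext
    · rfl
    · show ((p : ZMod p)) = _
      simp [ZMod.natCast_self]
  refine ⟨g, orderOf_eq_prime_pow ?_ ?_⟩
  · rw [pow_one, hgp]
    intro h
    apply hx
    have := congrArg SemidirectProduct.left h
    exact this
  · rw [pow_succ, pow_mul, pow_one, hgp, ← map_pow]
    have : (Multiplicative.ofAdd (∑ i ∈ Finset.range p, (β ^ i) x)) ^ p = 1 := by
      rw [← ofAdd_nsmul]
      simp [nsmul_eq_mul, CharP.cast_eq_zero L p]
    rw [this, map_one]
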